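/- arXiv:1310.4917 — 5 statements merged into one kernel-verified Lean document; each statement's English description precedes it below -/
import Mathlib

section
/- If the weak pullback omega-limit Ω_w(A,t) is strongly compact and uniformly strongly pullback attracts A, then Ω_s(A,t) = Ω_w(A,t). -/
open Filter Topology MeasureTheory

variable {X : Type*}

/-- Convergence of a sequence with respect to a distance function `d`. -/
def Conv (d : X → X → ℝ) (u : ℕ → X) (x : X) : Prop :=
  ∀ ε > 0, ∃ N, ∀ n ≥ N, d (u n) x < ε

/-- The `d`-distance between two paired sequences tends to zero. -/
def DistTendsZero (d : X → X → ℝ) (u v : ℕ → X) : Prop :=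
  ∀ ε > 0, ∃ N, ∀ n ≥ N, d (u n) (v n) < ε

/-- Sequential closure of a set with respect to the distance `d`. -/
def SeqClosure (d : X → X → ℝ) (A : Set X) : Set X :=
  {x | ∃ u : ℕ → X, (∀ n, u n ∈ A) ∧ Conv d u x}

/-- Sequential closedness with respect to the distance `d`. -/
def SeqClosed (d : X → X → ℝ) (A : Set X) : Prop :=
  SeqClosure d A ⊆ A

/-- Sequential compactness of a set with respect to the distance `d`. -/
def SeqCompactIn (d : X → X → ℝ) (A : Set X) : Prop :=
  ∀ u : ℕ → X, (∀ n, u n ∈ A) →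
    ∃ x ∈ A, ∃ φ : ℕ → ℕ, StrictMono φ ∧ Conv d (u ∘ φ) x

/-- `d` is a metric on `X`. -/
def IsMetric (d : X → X → ℝ) : Prop :=
  (∀ x y, 0 ≤ d x y) ∧ (∀ x y, d x y = 0 ↔ x = y) ∧ (∀ x y, d x y = d y x) ∧
  (∀ x y z, d x z ≤ d x y + d y z)

/-- Uniform convergence of trajectories on each compact subinterval `[s,T]`,
i.e. convergence in `C([s,∞);X)` with distance `d` on `X`. -/
def ConvTraj (d : X → X → ℝ) (s : ℝ) (u : ℕ → ℝ → X) (v : ℝ → X) : Prop :=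
  ∀ T : ℝ, ∀ ε > 0, ∃ N, ∀ n ≥ N, ∀ r ∈ Set.Icc s T, d (u n r) (v r) < ε

/-- A generalized evolutionary system: to each interval `[s,∞)` it assigns a
nonempty set of trajectories (encoded as functions `ℝ → X`, only the values on
`[s,∞)` being relevant), closed under restriction to later starting times. -/
structure GES (X : Type*) where
  traj : ℝ → Set (ℝ → X)
  nonempty : ∀ s : ℝ, (traj s).Nonempty
  mono : ∀ ⦃s s' : ℝ⦄, s ≤ s' → traj s ⊆ traj s'

namespace GES

variable (E : GES X)

/-- Complete trajectories: those whose restriction to every `[T,∞)` is a trajectory. -/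
def complete : Set (ℝ → X) := {u | ∀ T : ℝ, u ∈ E.traj T}

/-- `P(t,s)A = {u(t) : u ∈ E([s,∞)), u(s) ∈ A}`. -/
def P (t s : ℝ) (A : Set X) : Set X :=
  {x | ∃ u ∈ E.traj s, u s ∈ A ∧ u t = x}

/-- `P̃(t,s)A = {u(t) : u ∈ E((-∞,∞)), u(s) ∈ A}`. -/
def Ptil (t s : ℝ) (A : Set X) : Set X :=
  {x | ∃ u ∈ E.complete, u s ∈ A ∧ u t = x}

/-- The pullback omega-limit `Ω_d(A,t) = ⋂_{s≤t} cl_d(⋃_{r≤s} P(t,r)A)`. -/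
def Omega (d : X → X → ℝ) (A : Set X) (t : ℝ) : Set X :=
  ⋂ s ∈ Set.Iic t, SeqClosure d (⋃ r ∈ Set.Iic s, E.P t r A)

/-- The family `Afam` pullback attracts the set `B` in the metric `d`. -/
def PullbackAttracts (d : X → X → ℝ) (Afam : ℝ → Set X) (B : Set X) : Prop :=
  ∀ t : ℝ, ∀ ε > 0, ∃ s0 ≤ t, ∀ s ≤ s0, ∀ x ∈ E.P t s B, ∃ a ∈ Afam t, d x a < ε

/-- The `d`-pullback attractor: a family of `d`-closed, `d`-pullback attracting
sets which is minimal with respect to these properties. -/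
def IsPullbackAttractor (d : X → X → ℝ) (Afam : ℝ → Set X) : Prop :=
  (∀ t, SeqClosed d (Afam t)) ∧ E.PullbackAttracts d Afam Set.univ ∧
  ∀ B : ℝ → Set X, (∀ t, SeqClosed d (B t)) → E.PullbackAttracts d B Set.univ →
    ∀ t, Afam t ⊆ B t

/-- Pullback asymptotic compactness with respect to `d`. -/
def PullbackAsympCompact (d : X → X → ℝ) : Prop :=
  ∀ t : ℝ, ∀ s : ℕ → ℝ, (∀ n, s n ≤ t) → Tendsto s atTop atBot →
    ∀ x : ℕ → X, (∀ n, x n ∈ E.P t (s n) Set.univ) →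
      ∃ y : X, ∃ φ : ℕ → ℕ, StrictMono φ ∧ Conv d (x ∘ φ) y

/-- Pullback semi-invariance. -/
def PBSemiInv (B : ℝ → Set X) : Prop :=
  ∀ ⦃s t : ℝ⦄, s ≤ t → E.Ptil t s (B s) ⊆ B t

/-- Pullback invariance. -/
def PBInv (B : ℝ → Set X) : Prop :=
  ∀ ⦃s t : ℝ⦄, s ≤ t → E.Ptil t s (B s) = B t

/-- Pullback quasi-invariance. -/
def PBQuasiInv (B : ℝ → Set X) : Prop :=
  ∀ t : ℝ, ∀ b ∈ B t, ∃ u ∈ E.complete, u t = b ∧ ∀ s ≤ t, u s ∈ B s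

/-- Condition A1: `E([s,∞))` is compact in `C([s,∞);X_w)` for each `s`. -/
def A1 (d : X → X → ℝ) : Prop :=
  ∀ s : ℝ, ∀ u : ℕ → ℝ → X, (∀ n, u n ∈ E.traj s) →
    ∃ v ∈ E.traj s, ∃ φ : ℕ → ℕ, StrictMono φ ∧ ConvTraj d s (fun n => u (φ n)) v

end GES


lemma aux_conv_of_bound {Y : Type*} (d : Y → Y → ℝ) (u : ℕ → Y) (x : Y)
    (h : ∀ n, d (u n) x < 1 / (n + 1)) : Conv d u x := by
  intro ε hε
  obtain ⟨N, hN⟩ := exists_nat_one_div_lt hε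
  refine ⟨N, fun n hn => lt_of_lt_of_le (h n) ?_⟩
  calc (1 : ℝ) / (n + 1) ≤ 1 / (N + 1) := by
        apply one_div_le_one_div_of_le
        · positivity
        · exact_mod_cast Nat.succ_le_succ hn
    _ ≤ ε := le_of_lt hN

lemma aux_distTendsZero_of_bound {Y : Type*} (d : Y → Y → ℝ) (u v : ℕ → Y)
    (h : ∀ n, d (u n) (v n) < 1 / (n + 1)) : DistTendsZero d u v := by
  intro ε hε
  obtain ⟨N, hN⟩ := exists_nat_one_div_lt hε
  refine ⟨N, fun n hn => lt_of_lt_of_le (h n) ?_⟩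
  calc (1 : ℝ) / (n + 1) ≤ 1 / (N + 1) := by
        apply one_div_le_one_div_of_le
        · positivity
        · exact_mod_cast Nat.succ_le_succ hn
    _ ≤ ε := le_of_lt hN

lemma aux_conv_triangle {Y : Type*} {d : Y → Y → ℝ} (hd : IsMetric d)
    {u v : ℕ → Y} {x : Y} (h1 : DistTendsZero d u v) (h2 : Conv d v x) :
    Conv d u x := by
  intro ε hε
  obtain ⟨N1, hN1⟩ := h1 (ε / 2) (by linarith)
  obtain ⟨N2, hN2⟩ := h2 (ε / 2) (by linarith)
  refine ⟨max N1 N2, fun n hn => ?_⟩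
  have h1' := hN1 n (le_trans (le_max_left _ _) hn)
  have h2' := hN2 n (le_trans (le_max_right _ _) hn)
  have := hd.2.2.2 (u n) (v n) x
  linarith

lemma aux_distTendsZero_subseq {Y : Type*} (d : Y → Y → ℝ) {u v : ℕ → Y}
    (h : DistTendsZero d u v) {φ : ℕ → ℕ} (hφ : StrictMono φ) :
    DistTendsZero d (u ∘ φ) (v ∘ φ) := by
  intro ε hε
  obtain ⟨N, hN⟩ := h ε hε
  exact ⟨N, fun n hn => hN (φ n) (le_trans hn hφ.le_apply)⟩

lemma aux_conv_unique {Y : Type*} {d : Y → Y → ℝ} (hd : IsMetric d)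
    {u : ℕ → Y} {x y : Y} (h1 : Conv d u x) (h2 : Conv d u y) : x = y := by
  have key : ∀ ε > 0, d x y < ε := by
    intro ε hε
    obtain ⟨N1, hN1⟩ := h1 (ε / 2) (by linarith)
    obtain ⟨N2, hN2⟩ := h2 (ε / 2) (by linarith)
    set n := max N1 N2
    have h1' := hN1 n (le_max_left _ _)
    have h2' := hN2 n (le_max_right _ _)
    have htri := hd.2.2.2 x (u n) y
    have hsym := hd.2.2.1 x (u n)
    linarith
  by_contra h
  have hpos : 0 < d x y :=
    lt_of_le_of_ne (hd.1 x y) (fun h0 => h ((hd.2.1 x y).mp h0.symm))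
  exact lt_irrefl _ (key _ hpos)

/-- if `Ω_w(A,t)` is strongly compact and uniformly strongly
pullback attracts `A`, then `Ω_s(A,t) = Ω_w(A,t)`. -/
theorem stmt2 {X : Type*} (E : GES X) (ds dw : X → X → ℝ)
    (hds : IsMetric ds) (hdw : IsMetric dw)
    (hcompact : SeqCompactIn dw (Set.univ : Set X))
    (H : ∀ u v : ℕ → X, DistTendsZero ds u v → DistTendsZero dw u v)
    (A : Set X) (t : ℝ)
    (hcomp : SeqCompactIn ds (E.Omega dw A t))
    (hattr : ∀ ε > 0, ∃ s0 ≤ t, ∀ s ≤ s0, ∀ x ∈ E.P t s A,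
      ∃ a ∈ E.Omega dw A t, ds x a < ε) :
    E.Omega ds A t = E.Omega dw A t := by
  apply Set.Subset.antisymm
  · -- strong omega limit ⊆ weak omega limit
    intro x hx
    rw [GES.Omega, Set.mem_iInter₂] at hx ⊢
    intro s hs
    obtain ⟨u, hu, hconv⟩ := hx s hs
    exact ⟨u, hu, aux_conv_triangle hdw (H u (fun _ => x) hconv)
      (fun ε hε => ⟨0, fun n _ => by
        rw [(hdw.2.1 x x).mpr rfl] at *; exact hε⟩)⟩
  · -- weak omega limit ⊆ strong omega limit
    intro x hx
    have hxW := hx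
    rw [GES.Omega, Set.mem_iInter₂] at hx
    rw [GES.Omega, Set.mem_iInter₂]
    intro s hs
    -- For each n, produce u n in the union and a n in Ω_w with small distances
    have key : ∀ n : ℕ, ∃ un : X, ∃ an : X,
        un ∈ (⋃ r ∈ Set.Iic s, E.P t r A) ∧ an ∈ E.Omega dw A t ∧
        ds un an < 1 / (n + 1) ∧ dw un x < 1 / (n + 1) := by
      intro n
      have hεn : (0 : ℝ) < 1 / (n + 1) := by positivity
      obtain ⟨s0, hs0t, hs0⟩ := hattr (1 / (n + 1)) hεn
      set sn := min s s0 with hsn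
      have hsnt : sn ≤ t := le_trans (min_le_left _ _) hs
      obtain ⟨v, hv, hvconv⟩ := hx sn hsnt
      obtain ⟨N, hN⟩ := hvconv (1 / (n + 1)) hεn
      have hvN := hv N
      rw [Set.mem_iUnion₂] at hvN
      obtain ⟨r, hr, hvr⟩ := hvN
      obtain ⟨a, ha, hda⟩ := hs0 r (le_trans (Set.mem_Iic.mp hr) (min_le_right _ _)) (v N) hvr
      refine ⟨v N, a, ?_, ha, hda, hN N le_rfl⟩
      rw [Set.mem_iUnion₂]
      exact ⟨r, Set.mem_Iic.mpr (le_trans (Set.mem_Iic.mp hr) (min_le_left _ _)), hvr⟩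
    choose u a hu ha hdsu hdwu using key
    -- compactness of Ω_w in ds
    obtain ⟨y, hy, φ, hφ, hconvy⟩ := hcomp a ha
    -- u ∘ φ converges to y in ds
    have hds_ua : DistTendsZero ds u a := aux_distTendsZero_of_bound ds u a hdsu
    have hconvuy : Conv ds (u ∘ φ) y :=
      aux_conv_triangle hds (aux_distTendsZero_subseq ds hds_ua hφ) hconvy
    -- u ∘ φ converges to x in dw
    have hconvux : Conv dw (u ∘ φ) x := by
      have : Conv dw u x := aux_conv_of_bound dw u x hdwu
      intro ε hε
      obtain ⟨N, hN⟩ := this ε hε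
      exact ⟨N, fun n hn => hN (φ n) (le_trans hn hφ.le_apply)⟩
    -- u ∘ φ converges to y in dw
    have hconvuyw : Conv dw (u ∘ φ) y :=
      aux_conv_triangle hdw
        (H _ _ (aux_distTendsZero_subseq ds hds_ua hφ))
        (aux_conv_triangle hdw (H _ _ (fun ε hε => by
          obtain ⟨N, hN⟩ := hconvy ε hε
          exact ⟨N, hN⟩)) (fun ε hε => ⟨0, fun n _ => by
            rw [(hdw.2.1 y y).mpr rfl]; exact hε⟩))
    have hxy : x = y := aux_conv_unique hdw hconvux hconvuyw
    subst hxy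
    exact ⟨u ∘ φ, fun n => hu (φ n), hconvuy⟩
end

section
/- If the d_•-pullback attractor A_•(t) exists (i.e., a family of d_•-closed, d_•-pullback attracting sets minimal with respect to these properties), then A_•(t) = Ω_•(X,t) for every t; in particular the pullback attractor is unique. -/
open Filter Topology MeasureTheory

variable {X : Type*}

lemma my_subset_seqClosure (d : X → X → ℝ) (hd : IsMetric d) (A : Set X) :
    A ⊆ SeqClosure d A := by
  intro x hx
  refine ⟨fun _ => x, fun _ => hx, fun ε hε => ⟨0, fun n _ => ?_⟩⟩
  simpa [(hd.2.1 x x).mpr rfl] using hε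

lemma my_mem_seqClosure_of_approx (d : X → X → ℝ) (hd : IsMetric d) (A : Set X) (x : X)
    (h : ∀ ε > 0, ∃ a ∈ A, d x a < ε) : x ∈ SeqClosure d A := by
  choose u hu hdu using fun n : ℕ => h (1 / (n + 1)) (by positivity)
  refine ⟨u, hu, fun ε hε => ?_⟩
  obtain ⟨N, hN⟩ := exists_nat_one_div_lt hε
  refine ⟨N, fun n hn => ?_⟩
  have h1 : d x (u n) < 1 / (n + 1) := hdu n
  have h2 : (1 : ℝ) / (n + 1) ≤ 1 / (N + 1) := by
    apply one_div_le_one_div_of_le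
    · positivity
    · exact_mod_cast Nat.succ_le_succ hn
  have hs := hd.2.2.1 (u n) x
  linarith

lemma my_approx_of_mem_seqClosure (d : X → X → ℝ) (hd : IsMetric d) (A : Set X) (x : X)
    (h : x ∈ SeqClosure d A) : ∀ ε > 0, ∃ a ∈ A, d x a < ε := by
  intro ε hε
  obtain ⟨u, hu, hconv⟩ := h
  obtain ⟨N, hN⟩ := hconv ε hε
  refine ⟨u N, hu N, ?_⟩
  have := hN N le_rfl
  have hs := hd.2.2.1 (u N) x
  linarith

lemma my_seqClosed_seqClosure (d : X → X → ℝ) (hd : IsMetric d) (A : Set X) :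
    SeqClosed d (SeqClosure d A) := by
  intro x hx
  apply my_mem_seqClosure_of_approx d hd
  intro ε hε
  obtain ⟨a, ha, hda⟩ := my_approx_of_mem_seqClosure d hd _ x hx (ε / 2) (by linarith)
  obtain ⟨b, hb, hdb⟩ := my_approx_of_mem_seqClosure d hd _ a ha (ε / 2) (by linarith)
  refine ⟨b, hb, ?_⟩
  have := hd.2.2.2 x a b
  linarith

lemma my_omega_subset (E : GES X) (d : X → X → ℝ) (hd : IsMetric d) (B : ℝ → Set X)
    (hcl : ∀ t, SeqClosed d (B t)) (hatt : E.PullbackAttracts d B Set.univ) (t : ℝ) :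
    E.Omega d Set.univ t ⊆ B t := by
  intro x hx
  apply hcl t
  apply my_mem_seqClosure_of_approx d hd
  intro ε hε
  obtain ⟨s0, hs0t, hatt'⟩ := hatt t (ε / 2) (by linarith)
  have hmem : x ∈ SeqClosure d (⋃ r ∈ Set.Iic s0, E.P t r Set.univ) :=
    Set.mem_iInter₂.mp hx s0 hs0t
  obtain ⟨y, hy, hdy⟩ := my_approx_of_mem_seqClosure d hd _ x hmem (ε / 2) (by linarith)
  obtain ⟨r, hr, hPr⟩ := Set.mem_iUnion₂.mp hy
  obtain ⟨b, hbB, hb⟩ := hatt' r hr y hPr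
  refine ⟨b, hbB, ?_⟩
  have := hd.2.2.2 x y b
  linarith

lemma my_attractor_subset_omega (E : GES X) (d : X → X → ℝ) (hd : IsMetric d)
    (Afam : ℝ → Set X) (h : E.IsPullbackAttractor d Afam) (t : ℝ) :
    Afam t ⊆ E.Omega d Set.univ t := by
  intro a ha
  refine Set.mem_iInter₂.mpr fun s hs => ?_
  set B : ℝ → Set X := fun τ =>
    SeqClosure d (⋃ r ∈ Set.Iic (if τ = t then s else τ), E.P τ r Set.univ) with hB
  have hclB : ∀ τ, SeqClosed d (B τ) := fun τ => my_seqClosed_seqClosure d hd _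
  have hattB : E.PullbackAttracts d B Set.univ := by
    intro τ ε hε
    refine ⟨if τ = t then s else τ, ?_, ?_⟩
    · split_ifs with h'
      · exact h' ▸ hs
      · exact le_rfl
    · intro s' hs' x hx
      refine ⟨x, ?_, ?_⟩
      · exact my_subset_seqClosure d hd _ (Set.mem_biUnion hs' hx)
      · simpa [(hd.2.1 x x).mpr rfl] using hε
  have hmem := h.2.2 B hclB hattB t ha
  simpa only [hB, if_pos rfl, if_true] using hmem

/-- if the `d`-pullback attractor exists then it equals
`Ω_d(X,t)`; in particular the pullback attractor is unique. -/
theorem stmt4 {X : Type*} (E : GES X) (d : X → X → ℝ) (hd : IsMetric d)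
    (Afam : ℝ → Set X) (h : E.IsPullbackAttractor d Afam) :
    (∀ t : ℝ, Afam t = E.Omega d Set.univ t) ∧
    (∀ Afam' : ℝ → Set X, E.IsPullbackAttractor d Afam' → ∀ t : ℝ, Afam' t = Afam t) := by
  have key : ∀ Afam' : ℝ → Set X, E.IsPullbackAttractor d Afam' →
      ∀ t : ℝ, Afam' t = E.Omega d Set.univ t := by
    intro Afam' h' t
    exact le_antisymm (my_attractor_subset_omega E d hd Afam' h' t)
      (my_omega_subset E d hd Afam' h'.1 h'.2.1 t)
  exact ⟨key Afam h, fun Afam' h' t => (key Afam' h' t).trans (key Afam h t).symm⟩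
end

section
/- The d_•-pullback attractor A_•(t) exists if and only if Ω_•(X,t) is a d_•-pullback attracting family of sets. -/
open Filter Topology MeasureTheory

variable {X : Type*}

lemma subset_seqClosure' {d : X → X → ℝ} (hd : IsMetric d) (A : Set X) :
    A ⊆ SeqClosure d A := by
  intro x hx
  exact ⟨fun _ => x, fun _ => hx, fun ε hε => ⟨0, fun n _ => by
    simpa [(hd.2.1 x x).mpr rfl] using hε⟩⟩

lemma seqClosed_seqClosure {d : X → X → ℝ} (hd : IsMetric d) (A : Set X) :
    SeqClosed d (SeqClosure d A) := by
  intro x hx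
  obtain ⟨u, hu, hconv⟩ := hx
  -- for each n choose a point of A close to u n
  have key : ∀ n : ℕ, ∃ a ∈ A, d a (u n) < 1 / (n + 1) := by
    intro n
    obtain ⟨v, hv, hvc⟩ := hu n
    have hpos : (0 : ℝ) < 1 / (n + 1) := by positivity
    obtain ⟨N, hN⟩ := hvc _ hpos
    exact ⟨v N, hv N, hN N le_rfl⟩
  choose a ha hda using key
  refine ⟨a, ha, fun ε hε => ?_⟩
  obtain ⟨N1, hN1⟩ := hconv (ε / 2) (by linarith)
  obtain ⟨N2, hN2⟩ := exists_nat_gt (2 / ε)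
  refine ⟨max N1 N2, fun n hn => ?_⟩
  have h1 : d (a n) (u n) < 1 / (n + 1) := hda n
  have h2 : d (u n) x < ε / 2 := hN1 n (le_trans (le_max_left _ _) hn)
  have h3 : (1 : ℝ) / (n + 1) < ε / 2 := by
    rw [div_lt_iff₀ (by positivity)]
    have : (2 : ℝ) / ε < n + 1 := by
      have : (N2 : ℝ) ≤ n := by exact_mod_cast le_trans (le_max_right N1 N2) hn
      linarith
    rw [div_lt_iff₀ hε] at this
    linarith [mul_comm ε ((n : ℝ) + 1)]
  calc d (a n) x ≤ d (a n) (u n) + d (u n) x := hd.2.2.2 _ _ _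
    _ < ε / 2 + ε / 2 := by linarith
    _ = ε := by ring

lemma mem_seqClosed_of_forall_near {d : X → X → ℝ} (hd : IsMetric d) {B : Set X}
    (hB : SeqClosed d B) {x : X} (h : ∀ ε > 0, ∃ b ∈ B, d x b < ε) : x ∈ B := by
  have key : ∀ n : ℕ, ∃ b ∈ B, d x b < 1 / (n + 1) := fun n => h _ (by positivity)
  choose b hb hdb using key
  refine hB ⟨b, hb, fun ε hε => ?_⟩
  obtain ⟨N, hN⟩ := exists_nat_gt (1 / ε)
  refine ⟨N, fun n hn => ?_⟩
  have h1 : d x (b n) < 1 / (n + 1) := hdb n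
  have h2 : (1 : ℝ) / (n + 1) ≤ 1 / (N + 1) := by
    apply one_div_le_one_div_of_le (by positivity)
    have : (N : ℝ) ≤ n := by exact_mod_cast hn
    linarith
  have h3 : (1 : ℝ) / (N + 1) < ε := by
    rw [div_lt_iff₀ (by positivity)]
    rw [div_lt_iff₀ hε] at hN
    nlinarith [hε.le]
  rw [hd.2.2.1]
  linarith

/-- the `d`-pullback attractor exists iff `Ω_d(X,t)` is a
`d`-pullback attracting family of sets. -/
theorem stmt5 {X : Type*} (E : GES X) (d : X → X → ℝ) (hd : IsMetric d) :
    (∃ Afam : ℝ → Set X, E.IsPullbackAttractor d Afam) ↔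
      E.PullbackAttracts d (fun t => E.Omega d Set.univ t) Set.univ := by
  constructor
  · -- attractor exists → Ω attracts
    rintro ⟨Afam, hclosed, hattr, hmin⟩
    -- For each fixed s, the family t' ↦ cl(⋃_{r ≤ min s t'} P(t',r)X) is closed
    -- and attracting, so Afam t ⊆ Ω t, and attraction transfers.
    have hsub : ∀ t : ℝ, Afam t ⊆ E.Omega d Set.univ t := by
      intro t
      simp only [GES.Omega, Set.subset_iInter_iff]
      intro s hs
      have := hmin (fun t' => SeqClosure d (⋃ r ∈ Set.Iic (min s t'), E.P t' r Set.univ))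
        (fun t' => seqClosed_seqClosure hd _) ?_ t
      · rwa [min_eq_left (Set.mem_Iic.mp hs)] at this
      · intro t' ε hε
        refine ⟨min s t', min_le_right _ _, fun s' hs' x hx => ?_⟩
        refine ⟨x, ?_, by simpa [(hd.2.1 x x).mpr rfl] using hε⟩
        exact subset_seqClosure' hd _ (Set.mem_biUnion hs' hx)
    intro t ε hε
    obtain ⟨s0, hs0, h⟩ := hattr t ε hε
    refine ⟨s0, hs0, fun s hs x hx => ?_⟩
    obtain ⟨a, ha, hda⟩ := h s hs x hx
    exact ⟨a, hsub t ha, hda⟩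
  · -- Ω attracts → Ω is the attractor
    intro hattr
    refine ⟨fun t => E.Omega d Set.univ t, fun t => ?_, hattr, ?_⟩
    · -- Ω t is seq-closed: intersection of seq-closed sets
      intro x hx
      obtain ⟨u, hu, hconv⟩ := hx
      simp only [GES.Omega, Set.mem_iInter]
      intro s hs
      refine seqClosed_seqClosure hd _ ⟨u, fun n => ?_, hconv⟩
      have := hu n
      simp only [GES.Omega, Set.mem_iInter] at this
      exact this s hs
    · -- minimality
      intro B hBclosed hBattr t x hx
      simp only [GES.Omega, Set.mem_iInter] at hx
      apply mem_seqClosed_of_forall_near hd (hBclosed t)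
      intro ε hε
      obtain ⟨s0, hs0, hB⟩ := hBattr t (ε / 2) (by linarith)
      obtain ⟨u, hu, hconv⟩ := hx s0 hs0
      obtain ⟨N, hN⟩ := hconv (ε / 2) (by linarith)
      have huN := hu N
      simp only [Set.mem_iUnion] at huN
      obtain ⟨r, hr, hur⟩ := huN
      obtain ⟨b, hb, hdb⟩ := hB r hr (u N) hur
      refine ⟨b, hb, ?_⟩
      have h1 : d (u N) x < ε / 2 := hN N le_rfl
      have h2 : d x (u N) < ε / 2 := by rw [hd.2.2.1]; exact h1
      calc d x b ≤ d x (u N) + d (u N) b := hd.2.2.2 _ _ _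
        _ < ε / 2 + ε / 2 := by linarith
        _ = ε := by ring
end

section
/- Let A ⊆ X be such that for each t ∈ ℝ and r ≤ t there is a trajectory u ∈ E([r,∞)) with u(t) ∈ A. Then Ω_w(A,t) is a nonempty, weakly compact set, and Ω_w(A,t) weakly pullback attracts A. -/
open Filter Topology MeasureTheory

variable {X : Type*}

section Aux

variable {X : Type*}

lemma conv_tail {d : X → X → ℝ} {u : ℕ → X} {x : X} (h : Conv d u x) (N : ℕ) :
    Conv d (fun n => u (n + N)) x := by
  intro ε hε
  obtain ⟨M, hM⟩ := h ε hε
  exact ⟨M, fun n hn => hM (n + N) (le_trans hn (Nat.le_add_right n N))⟩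

lemma mem_seqClosure_of_tail {d : X → X → ℝ} {B : Set X} {u : ℕ → X} {x : X}
    (h : Conv d u x) (N : ℕ) (hB : ∀ n ≥ N, u n ∈ B) : x ∈ SeqClosure d B :=
  ⟨fun n => u (n + N), fun n => hB (n + N) (Nat.le_add_left N n), conv_tail h N⟩

lemma seqClosure_seqClosed {d : X → X → ℝ} (hd : IsMetric d) (B : Set X) :
    SeqClosed d (SeqClosure d B) := by
  rintro x ⟨y, hy, hconv⟩
  have hsel : ∀ n : ℕ, ∃ b ∈ B, d b (y n) < 1 / (n + 1) := by
    intro n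
    obtain ⟨v, hv, hvc⟩ := hy n
    obtain ⟨N, hN⟩ := hvc (1 / (n + 1)) (by positivity)
    exact ⟨v N, hv N, hN N le_rfl⟩
  choose b hbB hbd using hsel
  refine ⟨b, hbB, fun ε hε => ?_⟩
  obtain ⟨N1, hN1⟩ := hconv (ε / 2) (by linarith)
  obtain ⟨N2, hN2⟩ := exists_nat_gt (2 / ε)
  refine ⟨max N1 N2, fun n hn => ?_⟩
  have h1 : d (y n) x < ε / 2 := hN1 n (le_trans (le_max_left _ _) hn)
  have hn2 : (N2 : ℝ) ≤ n := Nat.cast_le.2 (le_trans (le_max_right _ _) hn)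
  have hεn : (1 : ℝ) / (n + 1) < ε / 2 := by
    rw [div_lt_div_iff₀ (by positivity) (by norm_num)]
    have h2e : 2 / ε < (n : ℝ) + 1 := by linarith
    have := (div_lt_iff₀ hε).mp h2e
    nlinarith
  have h2 : d (b n) (y n) < ε / 2 := lt_trans (hbd n) hεn
  calc d (b n) x ≤ d (b n) (y n) + d (y n) x := hd.2.2.2 _ _ _
    _ < ε := by linarith

lemma limit_mem_Omega (E : GES X) {dw : X → X → ℝ} (A : Set X) (t : ℝ)
    {x : ℕ → X} {s : ℕ → ℝ} (hs : ∀ n, s n ≤ -(n : ℝ))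
    (hx : ∀ n, x n ∈ E.P t (s n) A)
    {y : X} {φ : ℕ → ℕ} (hφ : StrictMono φ) (hconv : Conv dw (x ∘ φ) y) :
    y ∈ E.Omega dw A t := by
  refine Set.mem_iInter₂.2 fun s' _ => ?_
  obtain ⟨N, hN⟩ := exists_nat_ge (-s')
  refine mem_seqClosure_of_tail hconv N fun n hn => ?_
  have hφn : (N : ℝ) ≤ (φ n : ℝ) := Nat.cast_le.2 (le_trans hn hφ.le_apply)
  have : s (φ n) ≤ s' := le_trans (hs (φ n)) (by linarith)
  exact Set.mem_biUnion this (hx (φ n))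

end Aux

/-- if for each `t` and `r ≤ t` some trajectory on `[r,∞)` passes
through `A` at time `t`, then `Ω_w(A,t)` is nonempty, weakly compact, and
weakly pullback attracts `A`. -/
theorem stmt6 {X : Type*} (E : GES X) (dw : X → X → ℝ) (hdw : IsMetric dw)
    (hcompact : SeqCompactIn dw (Set.univ : Set X))
    (A : Set X) (hA : ∀ t r : ℝ, r ≤ t → ∃ u ∈ E.traj r, u t ∈ A) (t : ℝ) :
    (E.Omega dw A t).Nonempty ∧ SeqCompactIn dw (E.Omega dw A t) ∧
    (∀ ε > 0, ∃ s0 ≤ t, ∀ s ≤ s0, ∀ x ∈ E.P t s A,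
      ∃ a ∈ E.Omega dw A t, dw x a < ε) := by
  have hPne : ∀ r : ℝ, ∃ x, x ∈ E.P t r A := by
    intro r
    obtain ⟨u, hu, huA⟩ := hA r r le_rfl
    exact ⟨u t, u, hu, huA, rfl⟩
  constructor
  · -- Nonempty
    choose x hx using fun n : ℕ => hPne (-(n : ℝ))
    obtain ⟨y, -, φ, hφ, hconv⟩ := hcompact x (fun n => Set.mem_univ _)
    exact ⟨y, limit_mem_Omega E A t (fun n => le_rfl) hx hφ hconv⟩
  constructor
  · -- Sequentially compact
    intro u hu
    obtain ⟨y, -, φ, hφ, hconv⟩ := hcompact u (fun n => Set.mem_univ _)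
    refine ⟨y, ?_, φ, hφ, hconv⟩
    refine Set.mem_iInter₂.2 fun s hs => ?_
    have hmem : ∀ n, (u ∘ φ) n ∈ SeqClosure dw (⋃ r ∈ Set.Iic s, E.P t r A) :=
      fun n => Set.mem_iInter₂.1 (hu (φ n)) s hs
    exact seqClosure_seqClosed hdw _ ⟨u ∘ φ, hmem, hconv⟩
  · -- Attraction
    by_contra hcon
    push_neg at hcon
    obtain ⟨ε, hε, hfar⟩ := hcon
    have hsel : ∀ n : ℕ, ∃ s ≤ min t (-(n : ℝ)), ∃ x ∈ E.P t s A,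
        ∀ a ∈ E.Omega dw A t, ε ≤ dw x a := by
      intro n
      obtain ⟨s, hs, x, hxP, hxa⟩ := hfar (min t (-(n : ℝ))) (min_le_left _ _)
      exact ⟨s, hs, x, hxP, hxa⟩
    choose s hs x hxP hxa using hsel
    obtain ⟨y, -, φ, hφ, hconv⟩ := hcompact x (fun n => Set.mem_univ _)
    have hyΩ : y ∈ E.Omega dw A t :=
      limit_mem_Omega E A t (fun n => le_trans (hs n) (min_le_right _ _)) hxP hφ hconv
    obtain ⟨N, hN⟩ := hconv ε hε
    exact absurd (hN N le_rfl) (not_lt.2 (hxa (φ N) y hyΩ))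
end

section
/- Let E satisfy A2 (energy inequality) and A3 (strong convergence a.e.). Suppose u_n ∈ E([s,∞)) with u_n → u in C([s,t];X_w) for some u ∈ E([s,∞)), and u is strongly continuous at a point t* ∈ (s,t). Then u_n(t*) → u(t*) in the strong metric d_s. -/
open Filter Topology MeasureTheory

variable {X : Type*}

/-- Condition A2 (energy inequality) for a system on a normed phase space. -/
def A2 {H : Type*} [NormedAddCommGroup H] (E : GES H) : Prop :=
  ∀ ε > (0 : ℝ), ∀ s : ℝ, ∃ δ > (0 : ℝ), ∀ u ∈ E.traj s, ∀ t > s,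
    ∀ᵐ t0 ∂(volume : Measure ℝ), t0 ∈ Set.Ioo (t - δ) t → ‖u t‖ ≤ ‖u t0‖ + ε

/-- Condition A3 (strong convergence a.e.): weak convergence of trajectories in
`C([s,t];X_w)` implies strong (norm) convergence at almost every time. -/
def A3 {H : Type*} [NormedAddCommGroup H] (E : GES H) (dw : H → H → ℝ) : Prop :=
  ∀ s t : ℝ, s ≤ t → ∀ u ∈ E.traj s, ∀ un : ℕ → ℝ → H, (∀ n, un n ∈ E.traj s) →
    (∀ ε > (0 : ℝ), ∃ N, ∀ n ≥ N, ∀ r ∈ Set.Icc s t, dw (un n r) (u r) < ε) →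
    ∀ᵐ t0 ∂(volume : Measure ℝ), t0 ∈ Set.Icc s t →
      Conv (fun a b => ‖a - b‖) (fun n => un n t0) (u t0)

/-- under A2 and A3 (with `d_s` the norm metric on a space with
the Radon–Riesz property and `d_w` inducing the weak topology, so the norm is
weakly sequentially lower semicontinuous), if `u_n → u` in `C([s,t];X_w)` and
`u` is strongly continuous at `t* ∈ (s,t)`, then `u_n(t*) → u(t*)` strongly. -/
theorem stmt16 {H : Type*} [NormedAddCommGroup H] (E : GES H) (dw : H → H → ℝ)
    (hdw : IsMetric dw)
    (hRR : ∀ (u : ℕ → H) (x : H), Conv dw u x →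
      Tendsto (fun n => ‖u n‖) atTop (nhds ‖x‖) → Conv (fun a b => ‖a - b‖) u x)
    (hlsc : ∀ (u : ℕ → H) (x : H), Conv dw u x →
      ‖x‖ ≤ Filter.liminf (fun n => ‖u n‖) atTop)
    (hA2 : A2 E) (hA3 : A3 E dw)
    (s t : ℝ) (hst : s ≤ t) (u : ℝ → H) (hu : u ∈ E.traj s)
    (un : ℕ → ℝ → H) (hun : ∀ n, un n ∈ E.traj s)
    (hconv : ∀ ε > (0 : ℝ), ∃ N, ∀ n ≥ N, ∀ r ∈ Set.Icc s t, dw (un n r) (u r) < ε)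
    (tstar : ℝ) (htstar : tstar ∈ Set.Ioo s t)
    (hcont : ∀ ε > (0 : ℝ), ∃ δ > (0 : ℝ), ∀ r : ℝ, |r - tstar| < δ →
      ‖u r - u tstar‖ < ε) :
    Conv (fun a b => ‖a - b‖) (fun n => un n tstar) (u tstar) := by
  -- weak convergence at tstar
  have hwconv : Conv dw (fun n => un n tstar) (u tstar) := by
    intro ε hε
    obtain ⟨N, hN⟩ := hconv ε hε
    exact ⟨N, fun n hn => hN n hn tstar ⟨le_of_lt htstar.1, le_of_lt htstar.2⟩⟩
  -- upper bound on limsup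
  have hub : ∀ ε > (0 : ℝ), ∃ N, ∀ n ≥ N, ‖un n tstar‖ < ‖u tstar‖ + ε := by
    intro ε hε
    have hε3 : (0:ℝ) < ε / 3 := by linarith
    obtain ⟨δ, hδpos, hδ⟩ := hA2 (ε/3) hε3 s
    obtain ⟨δ', hδ'pos, hδ'⟩ := hcont (ε/3) hε3
    have hA3' := hA3 s t hst u hu un hun hconv
    have hA2n : ∀ᵐ t0 ∂(volume : Measure ℝ), ∀ n : ℕ,
        t0 ∈ Set.Ioo (tstar - δ) tstar → ‖un n tstar‖ ≤ ‖un n t0‖ + ε/3 := by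
      rw [MeasureTheory.ae_all_iff]
      intro n
      exact hδ (un n) (hun n) tstar htstar.1
    have hcomb := hA3'.and hA2n
    set a : ℝ := max (max (tstar - δ) (tstar - δ')) s with ha
    have halt : a < tstar := by
      rw [ha, max_lt_iff, max_lt_iff]
      exact ⟨⟨by linarith, by linarith⟩, htstar.1⟩
    have hex : ∃ t0 ∈ Set.Ioo a tstar,
        ((t0 ∈ Set.Icc s t → Conv (fun a b => ‖a - b‖) (fun n => un n t0) (u t0)) ∧
         ∀ n : ℕ, t0 ∈ Set.Ioo (tstar - δ) tstar → ‖un n tstar‖ ≤ ‖un n t0‖ + ε/3) := by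
      by_contra hcon
      have hzero := MeasureTheory.ae_iff.mp hcomb
      have hsub : Set.Ioo a tstar ⊆ {x | ¬ ((x ∈ Set.Icc s t →
          Conv (fun a b => ‖a - b‖) (fun n => un n x) (u x)) ∧
          ∀ n : ℕ, x ∈ Set.Ioo (tstar - δ) tstar → ‖un n tstar‖ ≤ ‖un n x‖ + ε/3)} := by
        intro x hx hP
        exact hcon ⟨x, hx, hP⟩
      have hle := measure_mono (μ := (volume : Measure ℝ)) hsub
      rw [hzero, Real.volume_Ioo] at hle
      have : (0:ENNReal) < ENNReal.ofReal (tstar - a) := ENNReal.ofReal_pos.mpr (by linarith)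
      exact absurd (le_antisymm hle zero_le) (ne_of_gt this)
    obtain ⟨t0, ht0, hgood, hA2good⟩ := hex
    have ht0a : a < t0 := ht0.1
    have hda : tstar - δ ≤ a := le_trans (le_max_left _ _) (le_max_left _ _)
    have hd'a : tstar - δ' ≤ a := le_trans (le_max_right _ _) (le_max_left _ _)
    have ht0δ : t0 ∈ Set.Ioo (tstar - δ) tstar :=
      ⟨lt_of_le_of_lt hda ht0.1, ht0.2⟩
    have ht0δ' : |t0 - tstar| < δ' := by
      rw [abs_lt]
      exact ⟨by linarith [ht0.1], by linarith [ht0.2, hδ'pos]⟩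
    have ht0st : t0 ∈ Set.Icc s t := by
      have hsa : s ≤ a := le_max_right _ _
      exact ⟨by linarith [ht0.1], le_of_lt (lt_trans ht0.2 htstar.2)⟩
    have hcontt0 : ‖u t0 - u tstar‖ < ε/3 := hδ' t0 ht0δ'
    obtain ⟨N, hN⟩ := hgood ht0st (ε/3) hε3
    refine ⟨N, fun n hn => ?_⟩
    have h1 : ‖un n tstar‖ ≤ ‖un n t0‖ + ε/3 := hA2good n ht0δ
    have h2 : ‖un n t0 - u t0‖ < ε/3 := hN n hn
    have h3 : ‖un n t0‖ ≤ ‖un n t0 - u t0‖ + ‖u t0‖ := by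
      have := norm_add_le (un n t0 - u t0) (u t0)
      simpa using this
    have h4 : ‖u t0‖ ≤ ‖u t0 - u tstar‖ + ‖u tstar‖ := by
      have := norm_add_le (u t0 - u tstar) (u tstar)
      simpa using this
    linarith
  -- lower bound via liminf
  have hliminf := hlsc (fun n => un n tstar) (u tstar) hwconv
  have hlb : ∀ ε > (0 : ℝ), ∀ᶠ n in atTop, ‖u tstar‖ - ε < ‖un n tstar‖ := by
    intro ε hε
    have hbdd : Filter.IsBoundedUnder (· ≥ ·) atTop (fun n => ‖un n tstar‖) :=
      ⟨0, Filter.eventually_map.mpr (Filter.Eventually.of_forall fun n => norm_nonneg _)⟩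
    exact Filter.eventually_lt_of_lt_liminf (lt_of_lt_of_le (by linarith) hliminf) hbdd
  -- combine to get Tendsto of norms
  have htnorm : Tendsto (fun n => ‖un n tstar‖) atTop (nhds ‖u tstar‖) := by
    rw [Metric.tendsto_atTop]
    intro ε hε
    obtain ⟨N1, hN1⟩ := hub ε hε
    obtain ⟨N2, hN2⟩ := (hlb ε hε).exists_forall_of_atTop
    refine ⟨max N1 N2, fun n hn => ?_⟩
    have hn1 := hN1 n (le_trans (le_max_left _ _) hn)
    have hn2 := hN2 n (le_trans (le_max_right _ _) hn)
    rw [Real.dist_eq, abs_lt]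
    constructor <;> linarith
  exact hRR _ _ hwconv htnorm
end
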